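/- For fixed k with 1 ≤ k ≤ n-1, the number d*^k_n of permutations p of {1,...,n} that avoid circular k-successions (i.e., p(i+1) ≠ p(i) + k for 1 ≤ i ≤ n-1 and p(1) ≠ p(n) + k, with the forbidden pairs being j(j+k) for 1 ≤ j ≤ n-k) satisfies d*^k_n = n · d^{k-1}_{n-1}, where d^{k-1}_{n-1} = Σ_{j=0}^{n-k} (-1)^j · C(n-k, j) · (n-1-j)!. -/

import Mathlib

open List Finset

namespace DStar

/-- insert `b` after the first occurrence of `a` -/
def insAfter (a b : ℕ) : List ℕ → List ℕ
  | [] => []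
  | x :: xs => if x = a then x :: b :: xs else x :: insAfter a b xs

theorem insAfter_append {a : ℕ} (b : ℕ) : ∀ (l₁ l₂ : List ℕ), a ∉ l₁ →
    insAfter a b (l₁ ++ a :: l₂) = l₁ ++ a :: b :: l₂
  | [], l₂, _ => by simp [insAfter]
  | x :: xs, l₂, h => by
    have hx : x ≠ a := fun hxa => h (by simp [hxa])
    have : a ∉ xs := fun hxa => h (by simp [hxa])
    simp [insAfter, hx, insAfter_append b xs l₂ this]

theorem chain'_imp_mem {R S : ℕ → ℕ → Prop} :
    ∀ {l : List ℕ}, (∀ x ∈ l, ∀ y ∈ l, R x y → S x y) → IsChain R l → IsChain S l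
  | [], _, _ => isChain_nil
  | [_], _, _ => isChain_singleton _
  | x :: y :: l, h, hc => by
    rw [isChain_cons_cons] at hc ⊢
    exact ⟨h x (by simp) y (by simp) hc.1,
      chain'_imp_mem (fun a ha b hb => h a (by simp [ha]) b (by simp [hb])) hc.2⟩

noncomputable def listToEquiv (t : Finset ℕ) (l : List ℕ) (hn : l.Nodup) (ht : l.toFinset = t) :
    Fin t.card ≃ {x // x ∈ t} :=
  Equiv.ofBijective
    (fun i => ⟨l.get (Fin.cast (by rw [← ht, List.toFinset_card_of_nodup hn]) i), by
      have h2 : ∀ x ∈ l, x ∈ t := fun x hx => by rw [← ht]; exact List.mem_toFinset.2 hx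
      exact h2 _ (List.get_mem l _)⟩)
    (by
      rw [Fintype.bijective_iff_injective_and_card]
      constructor
      · intro i j hij
        have := nodup_iff_injective_get.1 hn (Subtype.ext_iff.1 hij)
        simpa [Fin.ext_iff] using this
      · simp [Fintype.card_coe])

theorem listToEquiv_apply (t : Finset ℕ) (l : List ℕ) (hn : l.Nodup) (ht : l.toFinset = t)
    (i : Fin t.card) :
    ((listToEquiv t l hn ht i : ℕ)) = l.get (Fin.cast (by rw [← ht, List.toFinset_card_of_nodup hn]) i) :=
  rfl

theorem card_nodup_lists (t : Finset ℕ) :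
    Nat.card {l : List ℕ // l.Nodup ∧ l.toFinset = t} = (t.card).factorial := by
  classical
  have hcard : Fintype.card {x // x ∈ t} = t.card := Fintype.card_coe t
  have hbij : Function.Bijective
      (fun l : {l : List ℕ // l.Nodup ∧ l.toFinset = t} => listToEquiv t l.1 l.2.1 l.2.2) := by
    constructor
    · rintro ⟨l₁, hn₁, ht₁⟩ ⟨l₂, hn₂, ht₂⟩ h
      have hlen₁ : l₁.length = t.card := by rw [← ht₁, List.toFinset_card_of_nodup hn₁]
      have hlen₂ : l₂.length = t.card := by rw [← ht₂, List.toFinset_card_of_nodup hn₂]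
      apply Subtype.ext
      apply List.ext_get (by rw [hlen₁, hlen₂])
      intro i h₁ h₂
      have := congrArg (fun e : Fin t.card ≃ {x // x ∈ t} => ((e ⟨i, hlen₁ ▸ h₁⟩ : ℕ))) h
      simpa [listToEquiv_apply] using this
    · intro e
      have hinj : Function.Injective (fun i => ((e i : ℕ))) := fun i j hij =>
        e.injective (Subtype.ext hij)
      have hnd : (List.ofFn (fun i => ((e i : ℕ)))).Nodup := List.nodup_ofFn.2 hinj
      have htf : (List.ofFn (fun i => ((e i : ℕ)))).toFinset = t := by
        ext a
        simp only [List.mem_toFinset, List.mem_ofFn, Set.mem_range]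
        constructor
        · rintro ⟨i, rfl⟩; exact (e i).2
        · intro ha; exact ⟨e.symm ⟨a, ha⟩, by simp⟩
      refine ⟨⟨List.ofFn (fun i => ((e i : ℕ))), hnd, htf⟩, ?_⟩
      apply Equiv.ext
      intro i
      apply Subtype.ext
      simp [listToEquiv_apply, List.get_ofFn]
  rw [Nat.card_eq_of_bijective _ hbij, Nat.card_eq_fintype_card,
    Fintype.card_equiv ((Fintype.equivFinOfCardEq hcard).symm)]
  simp

theorem nodup_middle {a : ℕ} {l₁ l₂ : List ℕ} (h : (l₁ ++ a :: l₂).Nodup) :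
    a ∉ l₁ ∧ a ∉ l₂ := by
  simp [List.nodup_append, List.nodup_cons, List.disjoint_cons_right] at h
  exact ⟨fun ha => (h.2.2 a ha).1 rfl, h.2.1.1⟩

/-- membership in a `W`-set: anchored nodup words with chain condition. -/
def IsW (k : ℕ) (s T : Finset ℕ) (v₀ : ℕ) (l : List ℕ) : Prop :=
  l.Nodup ∧ l.toFinset = s ∧ List.IsChain (fun a b => a ∈ T → b = a + k) l ∧
    l.head? = some v₀ ∧ ∀ x ∈ l.getLast?, x ∉ T

theorem card_W_step (k : ℕ) (hk : 1 ≤ k) (s T : Finset ℕ) (v₀ : ℕ) (v : ℕ)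
    (hvT : v ∈ T) (hmax : ∀ w ∈ T, w ≤ v)
    (hmem : ∀ w ∈ T, w ∈ s ∧ w + k ∈ s) (hv₀ : v₀ ∈ s) (hv₀k : ∀ w ∈ T, w + k ≠ v₀) :
    Nat.card {l : List ℕ // IsW k s T v₀ l} =
      Nat.card {l : List ℕ // IsW k (s.erase (v + k)) (T.erase v) v₀ l} := by
  have hvkT : v + k ∉ T := fun h => by have := hmax _ h; omega
  have hvv : v ≠ v + k := by omega
  have hvs : v ∈ s := (hmem v hvT).1
  have hvks : v + k ∈ s := (hmem v hvT).2
  have hv₀ne : v₀ ≠ v + k := fun h => hv₀k v hvT h.symm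
  -- forward transfer
  have fwd : ∀ l₁ l₂ : List ℕ, IsW k (s.erase (v + k)) (T.erase v) v₀ (l₁ ++ v :: l₂) →
      IsW k s T v₀ (l₁ ++ v :: (v + k) :: l₂) := by
    rintro l₁ l₂ ⟨hn, ht, hc, hh, hl⟩
    have hvkl : v + k ∉ l₁ ++ v :: l₂ := by
      rw [← List.mem_toFinset, ht]; exact Finset.notMem_erase _ _
    obtain ⟨hvl₁, hvl₂⟩ := nodup_middle hn
    have hperm : (l₁ ++ v :: (v + k) :: l₂) ~ (v + k) :: (l₁ ++ v :: l₂) := by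
      calc l₁ ++ v :: (v + k) :: l₂ = (l₁ ++ [v]) ++ (v + k) :: l₂ := by simp
        _ ~ (v + k) :: ((l₁ ++ [v]) ++ l₂) := List.perm_middle
        _ = (v + k) :: (l₁ ++ v :: l₂) := by simp
    refine ⟨?_, ?_, ?_, ?_, ?_⟩
    · exact hperm.nodup_iff.2 (List.nodup_cons.2 ⟨hvkl, hn⟩)
    · have h2 : (l₁ ++ v :: (v + k) :: l₂).toFinset = insert (v + k) (l₁ ++ v :: l₂).toFinset := by
        ext a; simp [List.mem_toFinset, hperm.mem_iff]; tauto
      rw [h2, ht]; exact Finset.insert_erase hvks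
    · rw [List.isChain_append] at hc ⊢
      obtain ⟨hc₁, hc₂, hj⟩ := hc
      refine ⟨?_, ?_, ?_⟩
      · refine chain'_imp_mem (fun x hx y _ hR hxT => hR ?_) hc₁
        exact Finset.mem_erase.2 ⟨fun h => hvl₁ (h ▸ hx), hxT⟩
      · rw [List.isChain_cons_cons]
        refine ⟨fun _ => rfl, ?_⟩
        rw [List.isChain_cons]
        refine ⟨fun y _ hmem' => absurd hmem' hvkT, ?_⟩
        have hc₂' : IsChain (fun a b => a ∈ T.erase v → b = a + k) l₂ := (List.isChain_cons.1 hc₂).2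
        refine chain'_imp_mem (fun x hx y _ hR hxT => hR ?_) hc₂'
        exact Finset.mem_erase.2 ⟨fun h => hvl₂ (h ▸ hx), hxT⟩
      · intro x hx y hy
        simp only [List.head?_cons, Option.mem_some_iff] at hy
        subst hy
        intro hxT
        have hx' : x ∈ l₁ := List.mem_of_getLast? hx
        exact hj x hx v (by simp) (Finset.mem_erase.2 ⟨fun h => hvl₁ (h ▸ hx'), hxT⟩)
    · cases l₁ <;> simpa using hh
    · intro x hx hxT
      cases l₂ with
      | nil =>
        have hgl : (l₁ ++ v :: (v + k) :: ([] : List ℕ)).getLast? = some (v + k) := by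
          have : l₁ ++ v :: (v + k) :: ([] : List ℕ) = (l₁ ++ [v]) ++ [v + k] := by simp
          rw [this, List.getLast?_concat]
        rw [hgl] at hx
        simp only [Option.mem_some_iff] at hx
        exact hvkT (hx ▸ hxT)
      | cons b l₂' =>
        have hgl : (l₁ ++ v :: (v + k) :: b :: l₂').getLast? = (b :: l₂').getLast? := by
          rw [List.getLast?_append_of_ne_nil _ (by simp), List.getLast?_cons_cons,
            List.getLast?_cons_cons]
        have hgl' : (l₁ ++ v :: b :: l₂').getLast? = (b :: l₂').getLast? := by
          rw [List.getLast?_append_of_ne_nil _ (by simp), List.getLast?_cons_cons]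
        rw [hgl] at hx
        have hxl₂ : x ∈ b :: l₂' := List.mem_of_getLast? hx
        have := hl x (by rw [hgl']; exact hx)
        exact this (Finset.mem_erase.2 ⟨fun h => hvl₂ (h ▸ hxl₂), hxT⟩)
  -- backward transfer
  have bwd : ∀ l₁ l₂ : List ℕ, IsW k s T v₀ (l₁ ++ v :: (v + k) :: l₂) →
      IsW k (s.erase (v + k)) (T.erase v) v₀ (l₁ ++ v :: l₂) := by
    rintro l₁ l₂ ⟨hn, ht, hc, hh, hl⟩
    have hperm : (l₁ ++ v :: (v + k) :: l₂) ~ (v + k) :: (l₁ ++ v :: l₂) := by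
      calc l₁ ++ v :: (v + k) :: l₂ = (l₁ ++ [v]) ++ (v + k) :: l₂ := by simp
        _ ~ (v + k) :: ((l₁ ++ [v]) ++ l₂) := List.perm_middle
        _ = (v + k) :: (l₁ ++ v :: l₂) := by simp
    have hn' : ((v + k) :: (l₁ ++ v :: l₂)).Nodup := hperm.nodup_iff.1 hn
    rw [List.nodup_cons] at hn'
    obtain ⟨hvknl, hn''⟩ := hn'
    obtain ⟨hvl₁, hvl₂⟩ := nodup_middle hn''
    refine ⟨hn'', ?_, ?_, ?_, ?_⟩
    · have h2 : (l₁ ++ v :: (v + k) :: l₂).toFinset = insert (v + k) (l₁ ++ v :: l₂).toFinset := by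
        ext a; simp [List.mem_toFinset, hperm.mem_iff]; tauto
      rw [← ht, h2, Finset.erase_insert (fun hcon => hvknl (List.mem_toFinset.1 hcon))]
    · rw [List.isChain_append] at hc ⊢
      obtain ⟨hc₁, hc₂, hj⟩ := hc
      have hc₃ : IsChain (fun a b => a ∈ T → b = a + k) ((v + k) :: l₂) := (List.isChain_cons_cons.1 hc₂).2
      have hc₄ : IsChain (fun a b => a ∈ T → b = a + k) l₂ := (List.isChain_cons.1 hc₃).2
      refine ⟨hc₁.imp (fun _ _ hR hxT => hR (Finset.mem_of_mem_erase hxT)), ?_, ?_⟩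
      · rw [List.isChain_cons]
        exact ⟨fun y _ hmem' => absurd hmem' (Finset.notMem_erase _ _),
          hc₄.imp (fun _ _ hR hxT => hR (Finset.mem_of_mem_erase hxT))⟩
      · intro x hx y hy
        simp only [List.head?_cons, Option.mem_some_iff] at hy
        subst hy
        intro hxT
        exact hj x hx v (by simp) (Finset.mem_of_mem_erase hxT)
    · cases l₁ <;> simpa using hh
    · intro x hx hxT'
      have hxT : x ∈ T := Finset.mem_of_mem_erase hxT'
      cases l₂ with
      | nil =>
        have hgl : (l₁ ++ v :: ([] : List ℕ)).getLast? = some v := by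
          have : l₁ ++ v :: ([] : List ℕ) = l₁ ++ [v] := by simp
          rw [this, List.getLast?_concat]
        rw [hgl] at hx
        simp only [Option.mem_some_iff] at hx
        subst hx
        exact (Finset.mem_erase.1 hxT').1 rfl
      | cons b l₂' =>
        have hgl : (l₁ ++ v :: (v + k) :: b :: l₂').getLast? = (b :: l₂').getLast? := by
          rw [List.getLast?_append_of_ne_nil _ (by simp), List.getLast?_cons_cons,
            List.getLast?_cons_cons]
        have hgl' : (l₁ ++ v :: b :: l₂').getLast? = (b :: l₂').getLast? := by
          rw [List.getLast?_append_of_ne_nil _ (by simp), List.getLast?_cons_cons]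
        exact hl x (by rw [hgl]; rw [hgl'] at hx; exact hx) hxT
  -- decomposition of a member of W s T
  have decomp : ∀ l : List ℕ, IsW k s T v₀ l → ∃ l₁ l₂, l = l₁ ++ v :: (v + k) :: l₂ := by
    rintro l ⟨hn, ht, hc, hh, hl⟩
    have hvl : v ∈ l := by rw [← List.mem_toFinset, ht]; exact hvs
    obtain ⟨l₁, t, rfl⟩ := List.append_of_mem hvl
    cases t with
    | nil =>
      exfalso
      refine hl v ?_ hvT
      have : l₁ ++ v :: ([] : List ℕ) = l₁ ++ [v] := by simp
      rw [this, List.getLast?_concat]; rfl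
    | cons b l₂ =>
      have hc2 : IsChain (fun a b => a ∈ T → b = a + k) (v :: b :: l₂) :=
        (List.isChain_append.1 hc).2.1
      have hb : b = v + k := (List.isChain_cons_cons.1 hc2).1 hvT
      exact ⟨l₁, l₂, by rw [hb]⟩
  -- erase identity
  have erid : ∀ l₁ l₂ : List ℕ, v + k ∉ l₁ → (l₁ ++ v :: (v + k) :: l₂).erase (v + k) = l₁ ++ v :: l₂ := by
    intro l₁ l₂ h1
    rw [List.erase_append_right _ h1, List.erase_cons_tail (by simp [hvv]; omega), List.erase_cons_head]
  -- the bijection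
  have key : ∀ l' : List ℕ, IsW k (s.erase (v + k)) (T.erase v) v₀ l' →
      IsW k s T v₀ (insAfter v (v + k) l') ∧ (insAfter v (v + k) l').erase (v + k) = l' := by
    intro l' hW'
    have hn := hW'.1
    have ht := hW'.2.1
    have hvl : v ∈ l' := by
      rw [← List.mem_toFinset, ht]; exact Finset.mem_erase.2 ⟨hvv, hvs⟩
    obtain ⟨l₁, l₂, rfl⟩ := List.append_of_mem hvl
    obtain ⟨hvl₁, _⟩ := nodup_middle hn
    have hvkl : v + k ∉ l₁ ++ v :: l₂ := by
      rw [← List.mem_toFinset, ht]; exact Finset.notMem_erase _ _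
    have hins : insAfter v (v + k) (l₁ ++ v :: l₂) = l₁ ++ v :: (v + k) :: l₂ :=
      insAfter_append _ _ _ hvl₁
    rw [hins]
    exact ⟨fwd l₁ l₂ hW', erid l₁ l₂ (fun h => hvkl (List.mem_append_left _ h))⟩
  symm
  apply Nat.card_eq_of_bijective
    (fun l' : {l : List ℕ // IsW k (s.erase (v + k)) (T.erase v) v₀ l} =>
      (⟨insAfter v (v + k) l'.1, (key l'.1 l'.2).1⟩ : {l : List ℕ // IsW k s T v₀ l}))
  constructor
  · rintro ⟨l₁, h₁⟩ ⟨l₂, h₂⟩ h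
    have e₁ := (key l₁ h₁).2
    have e₂ := (key l₂ h₂).2
    simp only [Subtype.mk.injEq] at h
    apply Subtype.ext
    show l₁ = l₂
    rw [← e₁, ← e₂, h]
  · rintro ⟨l, hW⟩
    obtain ⟨l₁, l₂, rfl⟩ := decomp l hW
    have hn := hW.1
    obtain ⟨hvl₁, _⟩ := nodup_middle (l₁ := l₁) (l₂ := (v + k) :: l₂) hn
    refine ⟨⟨l₁ ++ v :: l₂, bwd l₁ l₂ hW⟩, ?_⟩
    apply Subtype.ext
    exact insAfter_append _ _ _ hvl₁

theorem card_W_empty (k : ℕ) (s : Finset ℕ) (v₀ : ℕ) (hv : v₀ ∈ s) :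
    Nat.card {l : List ℕ // IsW k s ∅ v₀ l} = (s.card - 1).factorial := by
  have triv : ∀ m : List ℕ, List.IsChain (fun a b => a ∈ (∅ : Finset ℕ) → b = a + k) m :=
    fun m => List.isChain_iff_getElem.2 (fun i h hmem => by simp at hmem)
  have hbij : Function.Bijective
      (fun l' : {l : List ℕ // l.Nodup ∧ l.toFinset = s.erase v₀} =>
        (⟨v₀ :: l'.1, by
          obtain ⟨l', hn, ht⟩ := l'
          have hv₀l : v₀ ∉ l' := fun h =>
            (Finset.notMem_erase v₀ s) (ht ▸ List.mem_toFinset.2 h)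
          refine ⟨List.nodup_cons.2 ⟨hv₀l, hn⟩, ?_, triv _, rfl, fun x _ h => by simp at h⟩
          rw [List.toFinset_cons, ht, Finset.insert_erase hv]⟩ :
          {l : List ℕ // IsW k s ∅ v₀ l})) := by
    constructor
    · rintro ⟨l₁, h₁⟩ ⟨l₂, h₂⟩ h
      simp only [Subtype.mk.injEq, List.cons.injEq] at h
      exact Subtype.ext h.2
    · rintro ⟨l, hn, ht, hc, hh, hl⟩
      cases l with
      | nil => simp at hh
      | cons x xs =>
        simp only [List.head?_cons, Option.some.injEq] at hh
        subst hh
        obtain ⟨hxl, hxs⟩ := List.nodup_cons.1 hn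
        refine ⟨⟨xs, hxs, ?_⟩, rfl⟩
        rw [List.toFinset_cons] at ht
        rw [← ht, Finset.erase_insert (fun h => hxl (List.mem_toFinset.1 h))]
  rw [← Nat.card_eq_of_bijective _ hbij, card_nodup_lists,
    Finset.card_erase_of_mem hv]

theorem count_W (k : ℕ) (hk : 1 ≤ k) :
    ∀ (j : ℕ) (T s : Finset ℕ) (v₀ : ℕ), T.card = j →
      (∀ w ∈ T, w ∈ s ∧ w + k ∈ s) → v₀ ∈ s → (∀ w ∈ T, w + k ≠ v₀) →
      Nat.card {l : List ℕ // IsW k s T v₀ l} = (s.card - 1 - j).factorial := by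
  intro j
  induction j with
  | zero =>
    intro T s v₀ hT hmem hv₀ hv₀k
    rw [Finset.card_eq_zero] at hT
    subst hT
    simpa using card_W_empty k s v₀ hv₀
  | succ j ih =>
    intro T s v₀ hT hmem hv₀ hv₀k
    have hne : T.Nonempty := by rw [← Finset.card_pos, hT]; omega
    set v := T.max' hne with hv
    have hvT : v ∈ T := T.max'_mem hne
    have hvkT : v + k ∉ T := fun h => by have := T.le_max' _ h; omega
    rw [card_W_step k hk s T v₀ v hvT (fun w hw => T.le_max' w hw) hmem hv₀ hv₀k]
    have h1 : ∀ w ∈ T.erase v, w ∈ s.erase (v + k) ∧ w + k ∈ s.erase (v + k) := by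
      intro w hw
      have hwT : w ∈ T := Finset.mem_of_mem_erase hw
      have hwv : w ≠ v := (Finset.mem_erase.1 hw).1
      constructor
      · exact Finset.mem_erase.2 ⟨fun h => hvkT (h ▸ hwT), (hmem w hwT).1⟩
      · exact Finset.mem_erase.2 ⟨fun h => hwv (by omega), (hmem w hwT).2⟩
    rw [ih (T.erase v) (s.erase (v + k)) v₀
      (by rw [Finset.card_erase_of_mem hvT, hT]; rfl) h1
      (Finset.mem_erase.2 ⟨fun h => hv₀k v hvT h.symm, hv₀⟩)
      (fun w hw => hv₀k w (Finset.mem_of_mem_erase hw))]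
    congr 1
    rw [Finset.card_erase_of_mem ((hmem v hvT).2)]
    omega

def Rcond (n k : ℕ) (T : Finset ℕ) (p : Equiv.Perm (Fin n)) : Prop :=
  ∀ u : Fin n, ((p u : ℕ) ∈ T) → ((p (finRotate n u) : ℕ) = (p u : ℕ) + k)

theorem rot_eq_succ {m i : ℕ} (h : i < m) :
    (finRotate (m + 1)) (⟨i, by omega⟩ : Fin (m + 1)) = ⟨i + 1, by omega⟩ := by
  apply Fin.ext
  rw [finRotate_succ_apply, Fin.val_add_one_of_lt (by
    apply Fin.lt_iff_val_lt_val.2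
    simpa using h)]

theorem rot_eq_zero {m : ℕ} : (finRotate (m + 1)) (⟨m, by omega⟩ : Fin (m + 1)) = 0 := by
  have h : (⟨m, by omega⟩ : Fin (m + 1)) = Fin.last m := rfl
  rw [h, finRotate_succ_apply, Fin.last_add_one]

theorem card_anchored (m k : ℕ) (hk : 1 ≤ k) (T : Finset ℕ)
    (hT : ∀ t ∈ T, t + k < m + 1) (v₀ : Fin (m + 1))
    (hv₀ : ∀ t ∈ T, t + k ≠ (v₀ : ℕ)) :
    Nat.card {p : Equiv.Perm (Fin (m + 1)) // Rcond (m + 1) k T p ∧ p 0 = v₀} =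
      Nat.card {l : List ℕ // IsW k (Finset.range (m + 1)) T (v₀ : ℕ) l} := by
  have hval : ∀ (p : Equiv.Perm (Fin (m + 1))) (j : ℕ)
      (hj : j < (List.ofFn (fun u : Fin (m + 1) => ((p u : ℕ)))).length),
      (List.ofFn (fun u : Fin (m + 1) => ((p u : ℕ)))).get ⟨j, hj⟩ =
        (p ⟨j, by simpa using hj⟩ : ℕ) := by
    intro p j hj
    rw [List.get_ofFn]
    rfl
  apply Nat.card_eq_of_bijective
    (fun p : {p : Equiv.Perm (Fin (m + 1)) // Rcond (m + 1) k T p ∧ p 0 = v₀} =>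
      (⟨List.ofFn (fun u : Fin (m + 1) => ((p.1 u : ℕ))), by
        obtain ⟨p, hR, h0⟩ := p
        refine ⟨?_, ?_, ?_, ?_, ?_⟩
        · exact List.nodup_ofFn.2 (fun a b h => p.injective (Fin.val_injective h))
        · ext a
          simp only [List.mem_toFinset, List.mem_ofFn, Set.mem_range, Finset.mem_range]
          constructor
          · rintro ⟨u, rfl⟩; exact (p u).isLt
          · intro ha; exact ⟨p.symm ⟨a, ha⟩, by simp⟩
        · rw [List.isChain_iff_getElem]
          intro i hi
          simp only [List.length_ofFn] at hi
          have him : i < m := by omega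
          simp only [List.getElem_ofFn]
          intro hiT
          have key := hR ⟨i, by omega⟩ hiT
          rw [rot_eq_succ him] at key
          exact key
        · rw [List.ofFn_succ, List.head?_cons, h0]
        · intro x hx hxT
          rw [List.ofFn_succ', List.concat_eq_append, List.getLast?_concat] at hx
          simp only [Option.mem_some_iff] at hx
          subst hx
          have key := hR (Fin.last m) hxT
          have hrl : finRotate (m + 1) (Fin.last m) = 0 := by
            rw [finRotate_succ_apply, Fin.last_add_one]
          rw [hrl, h0] at key
          exact hv₀ _ hxT key.symm⟩ :
        {l : List ℕ // IsW k (Finset.range (m + 1)) T (v₀ : ℕ) l}))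
  constructor
  · rintro ⟨p₁, h₁⟩ ⟨p₂, h₂⟩ h
    simp only [Subtype.mk.injEq] at h
    have hf := List.ofFn_injective h
    apply Subtype.ext
    apply Equiv.ext
    intro u
    exact Fin.val_injective (congrFun hf u)
  · rintro ⟨l, hn, ht, hc, hh, hl⟩
    have hlen : l.length = m + 1 := by
      rw [← List.toFinset_card_of_nodup hn, ht, Finset.card_range]
    have hnnil : l ≠ [] := by
      intro h; rw [h] at hlen; simp at hlen
    have hget : ∀ (i : ℕ) (h : i < l.length), l.get ⟨i, h⟩ < m + 1 := by
      intro i h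
      have h2 : l.get ⟨i, h⟩ ∈ l.toFinset := List.mem_toFinset.2 (List.get_mem l _)
      rw [ht] at h2
      exact Finset.mem_range.1 h2
    have hfi : Function.Injective
        (fun u : Fin (m + 1) => (⟨l.get ⟨u.val, by omega⟩, hget _ _⟩ : Fin (m + 1))) := by
      intro a b hab
      have h2 := congrArg Fin.val hab
      simp only at h2
      have h3 := nodup_iff_injective_get.1 hn h2
      apply Fin.ext
      simpa using congrArg Fin.val h3
    have hbij := (Fintype.bijective_iff_injective_and_card _).2 ⟨hfi, rfl⟩
    set p : Equiv.Perm (Fin (m + 1)) := Equiv.ofBijective _ hbij with hpdef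
    have hp : ∀ u : Fin (m + 1), (p u : ℕ) = l.get ⟨u.val, by omega⟩ := fun u => rfl
    have hRp : Rcond (m + 1) k T p := by
      intro u hu
      rw [hp u] at hu
      by_cases hum : (u : ℕ) < m
      · have hueq : u = ⟨(u : ℕ), by omega⟩ := Fin.ext rfl
        rw [hueq, rot_eq_succ hum, hp, hp]
        have key := (List.isChain_iff_getElem.1 hc) u.val (by omega)
        exact key hu
      · have hum' : (u : ℕ) = m := by omega
        exfalso
        have hidx : (⟨l.length - 1, by omega⟩ : Fin l.length) = ⟨(u : ℕ), by omega⟩ :=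
          Fin.ext (by simp; omega)
        refine hl (l.get ⟨(u : ℕ), by omega⟩) ?_ hu
        rw [List.getLast?_eq_getLast_of_ne_nil hnnil, List.getLast_eq_getElem]
        simp [hlen, hum']
    have hp0 : p 0 = v₀ := by
      apply Fin.ext
      rw [hp]
      have := hh
      rw [List.head?_eq_getElem?, List.getElem?_eq_getElem (by omega)] at this
      simpa using this
    refine ⟨⟨p, hRp, hp0⟩, ?_⟩
    apply Subtype.ext
    show List.ofFn (fun u : Fin (m + 1) => ((p u : ℕ))) = l
    apply List.ext_get (by simp [hlen])
    intro i h₁ h₂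
    rw [hval]
    rw [hp]

instance (n k : ℕ) (T : Finset ℕ) (p : Equiv.Perm (Fin n)) : Decidable (Rcond n k T p) :=
  decidable_of_iff (∀ u : Fin n, ((p u : ℕ) ∈ T) → ((p (finRotate n u) : ℕ) = (p u : ℕ) + k))
    Iff.rfl

theorem card_rcond (m k : ℕ) (hk : 1 ≤ k) (T : Finset ℕ) (hT : ∀ t ∈ T, t + k < m + 1) :
    Nat.card {p : Equiv.Perm (Fin (m + 1)) // Rcond (m + 1) k T p} =
      (m + 1) * (m - T.card).factorial := by
  have hv₀ : ∀ t ∈ T, t + k ≠ ((0 : Fin (m + 1)) : ℕ) := by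
    intro t ht
    simp only [Fin.val_zero]
    omega
  -- translation bijection
  have hbij : Function.Bijective
      (fun cp : Fin (m + 1) × {p : Equiv.Perm (Fin (m + 1)) //
          Rcond (m + 1) k T p ∧ p 0 = (0 : Fin (m + 1))} =>
        (⟨(Equiv.subRight cp.1).trans cp.2.1, by
          obtain ⟨c, p', hR, h0⟩ := cp
          intro u hu
          simp only [Equiv.trans_apply, Equiv.subRight_apply] at hu ⊢
          have key := hR (u - c) hu
          have hrot : finRotate (m + 1) u - c = finRotate (m + 1) (u - c) := by
            rw [finRotate_succ_apply, finRotate_succ_apply, sub_add_eq_add_sub]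
          rw [hrot]
          exact key⟩ :
          {p : Equiv.Perm (Fin (m + 1)) // Rcond (m + 1) k T p})) := by
    constructor
    · rintro ⟨c₁, p₁, hR₁, h₁⟩ ⟨c₂, p₂, hR₂, h₂⟩ h
      simp only [Subtype.mk.injEq] at h
      have happ : ∀ u : Fin (m + 1), p₁ (u - c₁) = p₂ (u - c₂) := by
        intro u
        have := congrArg (fun e : Equiv.Perm (Fin (m + 1)) => e u) h
        simpa using this
      have hc : c₁ = c₂ := by
        have h3 := happ c₂
        rw [sub_self, h₂, ← h₁] at h3
        have := p₁.injective h3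
        have h4 : c₂ - c₁ = 0 := this
        have := sub_eq_zero.1 h4
        exact this.symm
      subst hc
      have hpp : p₁ = p₂ := by
        apply Equiv.ext
        intro w
        have := happ (w + c₁)
        simpa [add_sub_cancel_right] using this
      subst hpp
      rfl
    · rintro ⟨p, hR⟩
      refine ⟨⟨p.symm 0, ⟨(Equiv.addRight (p.symm 0)).trans p, ?_, ?_⟩⟩, ?_⟩
      · intro u hu
        simp only [Equiv.trans_apply, Equiv.coe_addRight] at hu ⊢
        have key := hR (u + p.symm 0) hu
        have hrot : finRotate (m + 1) u + p.symm 0 = finRotate (m + 1) (u + p.symm 0) := by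
          rw [finRotate_succ_apply, finRotate_succ_apply, add_right_comm]
        rw [hrot]
        exact key
      · simp
      · apply Subtype.ext
        apply Equiv.ext
        intro u
        simp
  have hmem : ∀ w ∈ T, w ∈ Finset.range (m + 1) ∧ w + k ∈ Finset.range (m + 1) := by
    intro w hw
    have := hT w hw
    constructor <;> simp only [Finset.mem_range] <;> omega
  calc Nat.card {p : Equiv.Perm (Fin (m + 1)) // Rcond (m + 1) k T p}
      = Nat.card (Fin (m + 1) × {p : Equiv.Perm (Fin (m + 1)) //
          Rcond (m + 1) k T p ∧ p 0 = (0 : Fin (m + 1))}) := (Nat.card_eq_of_bijective _ hbij).symm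
    _ = (m + 1) * Nat.card {p : Equiv.Perm (Fin (m + 1)) //
          Rcond (m + 1) k T p ∧ p 0 = (0 : Fin (m + 1))} := by
        rw [Nat.card_prod, Nat.card_eq_fintype_card, Fintype.card_fin]
    _ = (m + 1) * (m - T.card).factorial := by
        rw [card_anchored m k hk T hT 0 hv₀,
          count_W k hk T.card T (Finset.range (m + 1)) ((0 : Fin (m + 1)) : ℕ) rfl hmem
            (by simp) hv₀]
        congr 2
        rw [Finset.card_range]
        omega

def Fset (N k : ℕ) (p : Equiv.Perm (Fin N)) : Finset (Fin N) :=
  Finset.univ.filter (fun i => ((p (finRotate N i)) : ℕ) = (p i : ℕ) + k)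

theorem pairs_bij (k : ℕ) (hk : 1 ≤ k) (m : ℕ) (p : Equiv.Perm (Fin (m + 1))) (j : ℕ) :
    ((Finset.powersetCard j (Finset.univ : Finset (Fin (m + 1)))).filter
        (fun S => S ⊆ Fset (m + 1) k p)).card =
      ((Finset.powersetCard j (Finset.range (m + 1 - k))).filter
        (fun T => Rcond (m + 1) k T p)).card := by
  have hpinj : Function.Injective (fun i : Fin (m + 1) => ((p i : ℕ))) := by
    intro a b hab
    exact p.injective (Fin.val_injective hab)
  have hFsetmem : ∀ (i : Fin (m + 1)), i ∈ Fset (m + 1) k p ↔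
      ((p (finRotate (m + 1) i)) : ℕ) = (p i : ℕ) + k := by
    intro i; simp [Fset]
  apply Finset.card_bij (fun S _ => S.image (fun i => ((p i : ℕ))))
  · intro S hS
    simp only [Finset.mem_filter, Finset.mem_powersetCard] at hS ⊢
    obtain ⟨⟨_, hcard⟩, hsub⟩ := hS
    refine ⟨⟨?_, ?_⟩, ?_⟩
    · intro t ht
      simp only [Finset.mem_image] at ht
      obtain ⟨i, hiS, rfl⟩ := ht
      have := (hFsetmem i).1 (hsub hiS)
      have hlt := (p (finRotate (m + 1) i)).isLt
      simp only [Finset.mem_range]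
      omega
    · rw [Finset.card_image_of_injective _ hpinj, hcard]
    · intro u hu
      simp only [Finset.mem_image] at hu
      obtain ⟨i, hiS, hieq⟩ := hu
      have : i = u := hpinj hieq
      subst this
      exact (hFsetmem i).1 (hsub hiS)
  · intro S₁ hS₁ S₂ hS₂ h
    exact Finset.image_injective hpinj h
  · intro T hT
    simp only [Finset.mem_filter, Finset.mem_powersetCard] at hT
    obtain ⟨⟨hTsub, hTcard⟩, hR⟩ := hT
    refine ⟨Finset.univ.filter (fun i => ((p i : ℕ)) ∈ T), ?_, ?_⟩
    · simp only [Finset.mem_filter, Finset.mem_powersetCard]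
      have himg : (Finset.univ.filter (fun i => ((p i : ℕ)) ∈ T)).image
          (fun i => ((p i : ℕ))) = T := by
        ext t
        simp only [Finset.mem_image, Finset.mem_filter, Finset.mem_univ, true_and]
        constructor
        · rintro ⟨i, hi, rfl⟩; exact hi
        · intro ht
          have htlt : t < m + 1 := by
            have := Finset.mem_range.1 (hTsub ht); omega
          exact ⟨p.symm ⟨t, htlt⟩, by simp [ht], by simp⟩
      refine ⟨⟨Finset.subset_univ _, ?_⟩, ?_⟩
      · calc #(Finset.univ.filter (fun i => ((p i : ℕ)) ∈ T))
              = #((Finset.univ.filter (fun i => ((p i : ℕ)) ∈ T)).image (fun i => ((p i : ℕ)))) :=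
            (Finset.card_image_of_injective _ hpinj).symm
          _ = #T := by rw [himg]
          _ = j := hTcard
      · intro i hi
        simp only [Finset.mem_filter, Finset.mem_univ, true_and] at hi
        exact (hFsetmem i).2 (hR i hi)
    · ext t
      simp only [Finset.mem_image, Finset.mem_filter, Finset.mem_univ, true_and]
      constructor
      · rintro ⟨i, hi, rfl⟩; exact hi
      · intro ht
        have htlt : t < m + 1 := by
          have := Finset.mem_range.1 (hTsub ht); omega
        exact ⟨p.symm ⟨t, htlt⟩, by simp [ht], by simp⟩

theorem sum_swap_j (k m j : ℕ) (hk : 1 ≤ k) :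
    ∑ S ∈ Finset.powersetCard j (Finset.univ : Finset (Fin (m + 1))),
        ((Finset.univ.filter
          (fun p : Equiv.Perm (Fin (m + 1)) => S ⊆ Fset (m + 1) k p)).card) =
    ∑ T ∈ Finset.powersetCard j (Finset.range (m + 1 - k)),
        ((Finset.univ.filter (fun p : Equiv.Perm (Fin (m + 1)) => Rcond (m + 1) k T p)).card) := by
  simp only [Finset.card_filter]
  rw [Finset.sum_comm, Finset.sum_comm
    (s := Finset.powersetCard j (Finset.range (m + 1 - k)))]
  refine Finset.sum_congr rfl fun p _ => ?_
  rw [← Finset.card_filter, ← Finset.card_filter]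
  exact pairs_bij k hk m p j


end DStar

open DStar in
theorem dstar_k_n (n k : ℕ) (hk : 1 ≤ k) (hkn : k ≤ n - 1) :
    (Nat.card {p : Equiv.Perm (Fin n) //
        ∀ i : Fin n, ((p (finRotate n i)) : ℕ) ≠ (p i : ℕ) + k} : ℤ) =
      (n : ℤ) * ∑ j ∈ Finset.range (n - k + 1),
        (-1 : ℤ) ^ j * (n - k).choose j * (n - 1 - j).factorial := by
  classical
  obtain ⟨m, rfl⟩ : ∃ m, n = m + 1 := ⟨n - 1, by omega⟩
  have hkm : k ≤ m := by omega
  simp only [Nat.add_sub_cancel]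
  rw [Nat.card_eq_fintype_card, Fintype.card_subtype]
  have hql : ∀ p : Equiv.Perm (Fin (m + 1)),
      (∀ i : Fin (m + 1), ((p (finRotate (m + 1) i)) : ℕ) ≠ (p i : ℕ) + k) ↔
        Fset (m + 1) k p = ∅ := by
    intro p
    rw [Fset, Finset.filter_eq_empty_iff]
    simp
  calc ((Finset.univ.filter (fun p : Equiv.Perm (Fin (m + 1)) =>
          ∀ i : Fin (m + 1), ((p (finRotate (m + 1) i)) : ℕ) ≠ (p i : ℕ) + k)).card : ℤ)
      = ∑ p ∈ (Finset.univ : Finset (Equiv.Perm (Fin (m + 1)))),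
          (if Fset (m + 1) k p = ∅ then (1 : ℤ) else 0) := by
        rw [Finset.card_filter]
        push_cast
        refine Finset.sum_congr rfl fun p _ => ?_
        rw [if_congr (hql p) rfl rfl]
    _ = ∑ p ∈ (Finset.univ : Finset (Equiv.Perm (Fin (m + 1)))),
          ∑ S ∈ (Finset.univ : Finset (Fin (m + 1))).powerset,
            (if S ⊆ Fset (m + 1) k p then (-1 : ℤ) ^ S.card else 0) := by
        refine Finset.sum_congr rfl fun p _ => ?_
        have h1 : ∑ S ∈ (Fset (m + 1) k p).powerset, (-1 : ℤ) ^ S.card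
            = ∑ S ∈ (Fset (m + 1) k p).powerset,
              (if S ⊆ Fset (m + 1) k p then (-1 : ℤ) ^ S.card else 0) :=
          Finset.sum_congr rfl (fun S hS => (if_pos (Finset.mem_powerset.1 hS)).symm)
        have h2 : ∑ S ∈ (Fset (m + 1) k p).powerset,
              (if S ⊆ Fset (m + 1) k p then (-1 : ℤ) ^ S.card else 0)
            = ∑ S ∈ (Finset.univ : Finset (Fin (m + 1))).powerset,
              (if S ⊆ Fset (m + 1) k p then (-1 : ℤ) ^ S.card else 0) :=
          Finset.sum_subset (Finset.powerset_mono.2 (Finset.subset_univ _))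
            (fun S _ hS => if_neg (fun hsub => hS (Finset.mem_powerset.2 hsub)))
        rw [← h2, ← h1, Finset.sum_powerset_neg_one_pow_card]
    _ = ∑ S ∈ (Finset.univ : Finset (Fin (m + 1))).powerset,
          ∑ p ∈ (Finset.univ : Finset (Equiv.Perm (Fin (m + 1)))),
            (if S ⊆ Fset (m + 1) k p then (-1 : ℤ) ^ S.card else 0) := Finset.sum_comm
    _ = ∑ S ∈ (Finset.univ : Finset (Fin (m + 1))).powerset,
          (-1 : ℤ) ^ S.card * ((Finset.univ.filter
            (fun p : Equiv.Perm (Fin (m + 1)) => S ⊆ Fset (m + 1) k p)).card : ℤ) := by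
        refine Finset.sum_congr rfl fun S _ => ?_
        rw [Finset.sum_ite, Finset.sum_const, Finset.sum_const_zero, add_zero, nsmul_eq_mul,
          mul_comm]
    _ = ∑ j ∈ Finset.range (m + 2),
          ∑ S ∈ Finset.powersetCard j (Finset.univ : Finset (Fin (m + 1))),
          (-1 : ℤ) ^ S.card * ((Finset.univ.filter
            (fun p : Equiv.Perm (Fin (m + 1)) => S ⊆ Fset (m + 1) k p)).card : ℤ) := by
        rw [← Finset.sum_fiberwise_of_maps_to (g := Finset.card) (t := Finset.range (m + 2))
          (fun S hS => Finset.mem_range.2 (Nat.lt_succ_of_le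
            (le_trans (Finset.card_le_card (Finset.mem_powerset.1 hS)) (by simp))))]
        refine Finset.sum_congr rfl fun j _ => Finset.sum_congr ?_ (fun _ _ => rfl)
        rw [Finset.powersetCard_eq_filter]
    _ = ∑ j ∈ Finset.range (m + 2), (-1 : ℤ) ^ j *
          ∑ S ∈ Finset.powersetCard j (Finset.univ : Finset (Fin (m + 1))),
            ((Finset.univ.filter
              (fun p : Equiv.Perm (Fin (m + 1)) => S ⊆ Fset (m + 1) k p)).card : ℤ) := by
        refine Finset.sum_congr rfl fun j _ => ?_
        rw [Finset.mul_sum]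
        refine Finset.sum_congr rfl fun S hS => ?_
        rw [(Finset.mem_powersetCard.1 hS).2]
    _ = ∑ j ∈ Finset.range (m + 2), (-1 : ℤ) ^ j *
          ∑ T ∈ Finset.powersetCard j (Finset.range (m + 1 - k)),
            ((Finset.univ.filter
              (fun p : Equiv.Perm (Fin (m + 1)) => Rcond (m + 1) k T p)).card : ℤ) := by
        refine Finset.sum_congr rfl fun j _ => ?_
        congr 1
        rw [← Nat.cast_sum, ← Nat.cast_sum, sum_swap_j k m j hk]
    _ = ∑ j ∈ Finset.range (m + 2), (-1 : ℤ) ^ j *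
          (((m + 1 - k).choose j : ℤ) * ((m + 1 : ℤ) * ((m - j).factorial : ℤ))) := by
        refine Finset.sum_congr rfl fun j _ => ?_
        congr 1
        have hcnt : ∀ T ∈ Finset.powersetCard j (Finset.range (m + 1 - k)),
            ((Finset.univ.filter
              (fun p : Equiv.Perm (Fin (m + 1)) => Rcond (m + 1) k T p)).card : ℤ) =
            ((m + 1 : ℤ) * ((m - j).factorial : ℤ)) := by
          intro T hT
          obtain ⟨hTsub, hTcard⟩ := Finset.mem_powersetCard.1 hT
          have hTk : ∀ t ∈ T, t + k < m + 1 := by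
            intro t ht
            have := Finset.mem_range.1 (hTsub ht)
            omega
          have := card_rcond m k hk T hTk
          rw [Nat.card_eq_fintype_card, Fintype.card_subtype] at this
          rw [this, hTcard]
          push_cast
          ring
        rw [Finset.sum_congr rfl hcnt, Finset.sum_const, Finset.card_powersetCard,
          Finset.card_range, nsmul_eq_mul]
    _ = ∑ j ∈ Finset.range (m + 2), ((m + 1 : ℕ) : ℤ) *
          ((-1 : ℤ) ^ j * ((m + 1 - k).choose j : ℤ) * ((m - j).factorial : ℤ)) := by
        refine Finset.sum_congr rfl fun j _ => ?_
        push_cast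
        ring
    _ = ((m + 1 : ℕ) : ℤ) * ∑ j ∈ Finset.range (m + 2),
          ((-1 : ℤ) ^ j * ((m + 1 - k).choose j : ℤ) * ((m - j).factorial : ℤ)) :=
        (Finset.mul_sum _ _ _).symm
    _ = ((m + 1 : ℕ) : ℤ) * ∑ j ∈ Finset.range (m + 1 - k + 1),
          ((-1 : ℤ) ^ j * ((m + 1 - k).choose j : ℤ) * ((m - j).factorial : ℤ)) := by
        congr 1
        refine (Finset.sum_subset (Finset.range_subset_range.2 (by omega)) fun j _ hj => ?_).symm
        have hj' : m + 1 - k < j := by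
          rw [Finset.mem_range] at hj
          omega
        rw [Nat.choose_eq_zero_of_lt hj']
        push_cast
        ring
    _ = ((m + 1 : ℕ) : ℤ) * ∑ j ∈ Finset.range (m + 1 - k + 1),
          (-1 : ℤ) ^ j * ((m + 1 - k).choose j : ℤ) * ((m - j).factorial : ℤ) := by
        congr 1
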